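/- arXiv:0712.2815 — 5 statements merged into one kernel-verified Lean document; each statement's English description precedes it below -/
import Mathlib

section
/- Let P_1,…,P_k and Q_1,…,Q_k be points of (K^×)^n. Suppose that for all but finitely many primes 𝔭 of K and for all positive integers m_1,…,m_k, if ∏_{i=1}^k P_i^{m_i} reduces to the identity of ((O_K/𝔭)^×)^n then ∏_{i=1}^k Q_i^{m_i} also reduces to the identity. Then for every i = 1,…,k and for all but finitely many primes 𝔭 of K, the order of (Q_i mod 𝔭) divides the order of (P_i mod 𝔭). -/
open NumberField

/-- `x ≡ 1 (mod 𝔭)` for `x ∈ K`: there is a representation `x = a/b` with `a, b`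
integral, `b ∉ 𝔭` and `a ≡ b (mod 𝔭)`. -/
def RedOne (K : Type*) [Field K] [NumberField K] (𝔭 : Ideal (𝓞 K)) (x : K) : Prop :=
  ∃ a b : 𝓞 K, b ∉ 𝔭 ∧ (algebraMap (𝓞 K) K b) * x = algebraMap (𝓞 K) K a ∧ a - b ∈ 𝔭

/-- The order of the reduction of `P ∈ (K^×)^n` modulo `𝔭`: the least `k > 0` such that
every coordinate of `P^k` reduces to `1` modulo `𝔭` (junk value `0` at the finitely many
bad primes, where no such `k` exists). -/
noncomputable def redOrder (K : Type*) [Field K] [NumberField K] {n : ℕ}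
    (𝔭 : Ideal (𝓞 K)) (P : Fin n → Kˣ) : ℕ :=
  sInf {k | 0 < k ∧ ∀ i, RedOne K 𝔭 ((P i : K) ^ k)}


section aux
variable {K : Type*} [Field K] [NumberField K] {𝔭 : Ideal (𝓞 K)}

lemma RedOne.ne_zero {x : K} (h : RedOne K 𝔭 x) : x ≠ 0 := by
  obtain ⟨a, b, hb, hab, hm⟩ := h
  rintro rfl
  rw [mul_zero] at hab
  have ha : a = 0 := by
    have := FaithfulSMul.algebraMap_injective (𝓞 K) K
    exact (this (by simpa using hab.symm))
  subst ha
  exact hb (by simpa using 𝔭.neg_mem hm)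

lemma RedOne.one (h𝔭 : 𝔭 ≠ ⊤) : RedOne K 𝔭 (1 : K) :=
  ⟨1, 1, fun h => h𝔭 ((Ideal.eq_top_iff_one _).2 h), by simp, by simp⟩

lemma RedOne.mul (h𝔭 : 𝔭.IsPrime) {x y : K} (hx : RedOne K 𝔭 x) (hy : RedOne K 𝔭 y) :
    RedOne K 𝔭 (x * y) := by
  obtain ⟨a, b, hb, hab, hm⟩ := hx
  obtain ⟨c, d, hd, hcd, hm'⟩ := hy
  refine ⟨a * c, b * d, fun h => ((h𝔭.mem_or_mem h).elim hb hd), ?_, ?_⟩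
  · push_cast [map_mul]
    rw [show algebraMap (𝓞 K) K b * algebraMap (𝓞 K) K d * (x * y)
        = (algebraMap (𝓞 K) K b * x) * (algebraMap (𝓞 K) K d * y) by ring, hab, hcd]
  · have : a * c - b * d = (a - b) * c + b * (c - d) := by ring
    rw [this]
    exact 𝔭.add_mem (𝔭.mul_mem_right _ hm) (𝔭.mul_mem_left _ hm')

lemma RedOne.inv {x : K} (h : RedOne K 𝔭 x) : RedOne K 𝔭 x⁻¹ := by
  have hx := h.ne_zero
  obtain ⟨a, b, hb, hab, hm⟩ := h
  have ha : a ∉ 𝔭 := fun haa => hb (by simpa using 𝔭.sub_mem haa hm)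
  refine ⟨b, a, ha, ?_, by simpa using 𝔭.neg_mem hm⟩
  field_simp [← hab]
  rw [← hab]; ring

lemma RedOne.pow (h𝔭 : 𝔭.IsPrime) {x : K} (h : RedOne K 𝔭 x) (n : ℕ) :
    RedOne K 𝔭 (x ^ n) := by
  induction n with
  | zero => simpa using RedOne.one h𝔭.ne_top
  | succ n ih => rw [pow_succ]; exact ih.mul h𝔭 h

lemma RedOne.zpow (h𝔭 : 𝔭.IsPrime) {x : K} (h : RedOne K 𝔭 x) (z : ℤ) :
    RedOne K 𝔭 (x ^ z) := by
  rcases z with n | n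
  · simpa using h.pow h𝔭 n
  · rw [zpow_negSucc]
    exact (h.pow h𝔭 (n + 1)).inv

lemma RedOne.prod (h𝔭 : 𝔭.IsPrime) {ι : Type*} (s : Finset ι) (f : ι → K)
    (h : ∀ i ∈ s, RedOne K 𝔭 (f i)) : RedOne K 𝔭 (∏ i ∈ s, f i) :=
  Finset.prod_induction f _ (fun _ _ => RedOne.mul h𝔭) (RedOne.one h𝔭.ne_top) h

lemma redOne_pow_gcd (h𝔭 : 𝔭.IsPrime) {x : K} {a b : ℕ}
    (ha : RedOne K 𝔭 (x ^ a)) (hb : RedOne K 𝔭 (x ^ b)) :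
    RedOne K 𝔭 (x ^ Nat.gcd a b) := by
  rcases eq_or_ne x 0 with rfl | hx
  · rcases Nat.eq_zero_or_pos a with rfl | hpa
    · rw [Nat.gcd_zero_left]; exact hb
    · exact absurd (zero_pow hpa.ne') ha.ne_zero
  · have key : x ^ (Nat.gcd a b : ℤ) = (x ^ a) ^ Nat.gcdA a b * (x ^ b) ^ Nat.gcdB a b := by
      rw [← zpow_natCast x a, ← zpow_natCast x b, ← zpow_mul, ← zpow_mul, ← zpow_add₀ hx,
        ← Nat.gcd_eq_gcd_ab]
    rw [← zpow_natCast x, key]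
    exact (ha.zpow h𝔭 _).mul h𝔭 (hb.zpow h𝔭 _)

end aux

section aux2
variable {K : Type*} [Field K] [NumberField K] {𝔭 : Ideal (𝓞 K)}

lemma redOrder_dvd (h𝔭 : 𝔭.IsPrime) {n : ℕ} {Qv : Fin n → Kˣ} {d : ℕ} (hd : 0 < d)
    (h : ∀ j, RedOne K 𝔭 ((Qv j : K) ^ d)) : redOrder K 𝔭 Qv ∣ d := by
  set S : Set ℕ := {m | 0 < m ∧ ∀ j, RedOne K 𝔭 ((Qv j : K) ^ m)} with hS
  have hdS : d ∈ S := ⟨hd, h⟩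
  have hmem : sInf S ∈ S := Nat.sInf_mem ⟨d, hdS⟩
  have hgS : Nat.gcd (sInf S) d ∈ S :=
    ⟨Nat.gcd_pos_of_pos_right _ hd, fun j => redOne_pow_gcd h𝔭 (hmem.2 j) (h j)⟩
  have hle : sInf S ≤ Nat.gcd (sInf S) d := Nat.sInf_le hgS
  have hdvd : Nat.gcd (sInf S) d ∣ sInf S := Nat.gcd_dvd_left _ _
  have : Nat.gcd (sInf S) d = sInf S :=
    Nat.le_antisymm (Nat.le_of_dvd hmem.1 hdvd) hle
  have : sInf S ∣ d := this ▸ Nat.gcd_dvd_right _ _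
  exact this

lemma redOne_pow_card (h𝔭 : 𝔭.IsMaximal) {a b : 𝓞 K} {x : K}
    (ha : a ∉ 𝔭) (hb : b ∉ 𝔭)
    (hx : (algebraMap (𝓞 K) K b) * x = algebraMap (𝓞 K) K a) :
    RedOne K 𝔭 (x ^ Nat.card (𝓞 K ⧸ 𝔭)ˣ) := by
  have hne : 𝔭 ≠ ⊥ :=
    Ring.ne_bot_of_isMaximal_of_not_isField h𝔭 (RingOfIntegers.not_isField K)
  haveI : Fintype (𝓞 K ⧸ 𝔭) := @Fintype.ofFinite _ (Ideal.finiteQuotientOfFreeOfNeBot 𝔭 hne)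
  letI : Field (𝓞 K ⧸ 𝔭) := Ideal.Quotient.field 𝔭
  set N := Nat.card (𝓞 K ⧸ 𝔭)ˣ with hN
  refine ⟨a ^ N, b ^ N, fun hmem => hb (h𝔭.isPrime.mem_of_pow_mem _ hmem), ?_, ?_⟩
  · rw [map_pow, map_pow, ← mul_pow, hx]
  · have key : ∀ c : 𝓞 K, c ∉ 𝔭 → (Ideal.Quotient.mk 𝔭 c) ^ N = 1 := by
      intro c hc
      have hc0 : Ideal.Quotient.mk 𝔭 c ≠ 0 := fun h0 =>
        hc ((Ideal.Quotient.eq_zero_iff_mem).1 h0)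
      have hu := (isUnit_iff_ne_zero.2 hc0)
      obtain ⟨u, hu⟩ := hu
      rw [← hu, ← Units.val_pow_eq_pow_val, pow_card_eq_one', Units.val_one]
    have : Ideal.Quotient.mk 𝔭 (a ^ N) = Ideal.Quotient.mk 𝔭 (b ^ N) := by
      rw [map_pow, map_pow, key a ha, key b hb]
    exact (Ideal.Quotient.mk_eq_mk_iff_sub_mem _ _).1 this

lemma finite_bad {a : 𝓞 K} (ha : a ≠ 0) :
    {𝔭 : Ideal (𝓞 K) | 𝔭.IsMaximal ∧ a ∈ 𝔭}.Finite := by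
  have hspan : Ideal.span {a} ≠ (0 : Ideal (𝓞 K)) := by
    simpa [Ideal.span_singleton_eq_bot] using ha
  have h := (Ideal.finite_factors hspan).image
    (fun v : IsDedekindDomain.HeightOneSpectrum (𝓞 K) => v.asIdeal)
  refine h.subset ?_
  rintro 𝔭 ⟨hmax, hmem⟩
  exact ⟨⟨𝔭, hmax.isPrime,
      Ring.ne_bot_of_isMaximal_of_not_isField hmax (RingOfIntegers.not_isField K)⟩,
    (Ideal.dvd_iff_le).2 ((Ideal.span_singleton_le_iff_mem _).2 hmem), rfl⟩

end aux2

/-- Remark 14: condition (MSP) implies the pairwise support condition, in the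
split-torus case. -/
theorem msp_implies_pairwise_sp_split_torus
    {K : Type*} [Field K] [NumberField K] {n k : ℕ}
    (P Q : Fin k → Fin n → Kˣ)
    (hyp : ∃ T : Finset (Ideal (𝓞 K)), ∀ 𝔭 : Ideal (𝓞 K), 𝔭.IsMaximal → 𝔭 ∉ T →
      ∀ m : Fin k → ℕ, (∀ i, 0 < m i) →
        (∀ j, RedOne K 𝔭 (∏ i, (P i j : K) ^ m i)) →
        (∀ j, RedOne K 𝔭 (∏ i, (Q i j : K) ^ m i))) :
    ∀ i : Fin k, ∃ T : Finset (Ideal (𝓞 K)), ∀ 𝔭 : Ideal (𝓞 K), 𝔭.IsMaximal → 𝔭 ∉ T →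
      redOrder K 𝔭 (Q i) ∣ redOrder K 𝔭 (P i) := by
  intro i
  obtain ⟨T, hT⟩ := hyp
  -- choose integral fractions for every coordinate of every P
  have hfrac : ∀ p : Fin k × Fin n, ∃ ab : 𝓞 K × 𝓞 K, ab.1 ≠ 0 ∧ ab.2 ≠ 0 ∧
      (algebraMap (𝓞 K) K ab.2) * (P p.1 p.2 : K) = algebraMap (𝓞 K) K ab.1 := by
    rintro ⟨i', j⟩
    obtain ⟨⟨a, b⟩, hab⟩ := IsLocalization.surj (nonZeroDivisors (𝓞 K)) (P i' j : K)
    have hb0 : (algebraMap (𝓞 K) K (b : 𝓞 K)) ≠ 0 := by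
      simpa using (nonZeroDivisors.coe_ne_zero b)
    have ha0 : a ≠ 0 := by
      rintro rfl
      rw [map_zero] at hab
      exact (P i' j).ne_zero ((mul_eq_zero.1 hab).resolve_right hb0)
    exact ⟨⟨a, b⟩, ha0, nonZeroDivisors.coe_ne_zero b, by rw [mul_comm]; exact hab⟩
  choose AB hA0 hB0 hABeq using hfrac
  classical
  -- the finite bad set
  have hbadfin : (⋃ p : Fin k × Fin n,
      ({𝔭 : Ideal (𝓞 K) | 𝔭.IsMaximal ∧ (AB p).1 ∈ 𝔭} ∪
       {𝔭 : Ideal (𝓞 K) | 𝔭.IsMaximal ∧ (AB p).2 ∈ 𝔭})).Finite :=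
    Set.finite_iUnion fun p => (finite_bad (hA0 p)).union (finite_bad (hB0 p))
  refine ⟨T ∪ hbadfin.toFinset, ?_⟩
  intro 𝔭 hmax h𝔭
  have h𝔭T : 𝔭 ∉ T := fun h => h𝔭 (Finset.mem_union_left _ h)
  have hgood : ∀ p : Fin k × Fin n, (AB p).1 ∉ 𝔭 ∧ (AB p).2 ∉ 𝔭 := by
    intro p
    constructor <;> intro hmem <;>
      exact h𝔭 (Finset.mem_union_right _ (hbadfin.mem_toFinset.2
        (Set.mem_iUnion.2 ⟨p, by simp [hmax, hmem]⟩)))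
  have hprime : 𝔭.IsPrime := hmax.isPrime
  have hne : 𝔭 ≠ ⊥ :=
    Ring.ne_bot_of_isMaximal_of_not_isField hmax (RingOfIntegers.not_isField K)
  haveI : Finite (𝓞 K ⧸ 𝔭) := Ideal.finiteQuotientOfFreeOfNeBot 𝔭 hne
  set N := Nat.card (𝓞 K ⧸ 𝔭)ˣ with hNdef
  haveI : Nonempty (𝓞 K ⧸ 𝔭)ˣ := ⟨1⟩
  have hN : 0 < N := Nat.card_pos
  have hPN : ∀ i' j, RedOne K 𝔭 ((P i' j : K) ^ N) := fun i' j =>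
    redOne_pow_card hmax (hgood (i', j)).1 (hgood (i', j)).2 (hABeq (i', j))
  -- N is in the set defining redOrder of P i, hence the inf is attained
  set S : Set ℕ := {m | 0 < m ∧ ∀ j, RedOne K 𝔭 ((P i j : K) ^ m)} with hSdef
  have hNS : N ∈ S := ⟨hN, fun j => hPN i j⟩
  set d := redOrder K 𝔭 (P i) with hddef
  have hdS : d ∈ S := Nat.sInf_mem ⟨N, hNS⟩
  have hd : 0 < d := hdS.1
  -- apply hypothesis with all exponents N
  have hA : ∀ j, RedOne K 𝔭 (∏ i', (Q i' j : K) ^ N) := by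
    refine hT 𝔭 hmax h𝔭T (fun _ => N) (fun _ => hN) ?_
    intro j
    exact RedOne.prod hprime _ _ (fun i' _ => hPN i' j)
  -- apply hypothesis with exponents m i = d + N, m i' = N otherwise
  set m : Fin k → ℕ := fun i' => if i' = i then d + N else N with hm
  have hC : ∀ j, RedOne K 𝔭 (∏ i', (Q i' j : K) ^ m i') := by
    refine hT 𝔭 hmax h𝔭T m (fun i' => by by_cases h : i' = i <;> simp [hm, h, hd, hN]) ?_
    intro j
    refine RedOne.prod hprime _ _ (fun i' _ => ?_)
    by_cases h : i' = i
    · subst h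
      have hmi : m i' = d + N := by simp [hm]
      rw [hmi, pow_add]
      exact (hdS.2 j).mul hprime (hPN i' j)
    · rw [hm]; simp only [if_neg h]; exact hPN i' j
  -- cancel to obtain RedOne ((Q i j)^d)
  have hQd : ∀ j, RedOne K 𝔭 ((Q i j : K) ^ d) := by
    intro j
    have hsplit : (∏ i', (Q i' j : K) ^ m i')
        = (Q i j : K) ^ d * ∏ i', (Q i' j : K) ^ N := by
      have : ∀ i', (Q i' j : K) ^ m i'
          = (if i' = i then (Q i' j : K) ^ d else 1) * (Q i' j : K) ^ N := by
        intro i'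
        rw [hm]
        by_cases h : i' = i <;> simp [h, pow_add]
      rw [Finset.prod_congr rfl (fun i' _ => this i'), Finset.prod_mul_distrib,
        Finset.prod_ite_eq' Finset.univ i (fun i' => (Q i' j : K) ^ d)]
      simp
    have h1 := (hC j).mul hprime (hA j).inv
    rw [hsplit, mul_assoc, mul_inv_cancel₀ (hA j).ne_zero, mul_one] at h1
    exact h1
  exact redOrder_dvd hprime hd hQd
end

section
/- Let A, B ∈ M_n(ℤ) and let d be a nonzero integer such that B·A = d·I_n. Let R ∈ (K^×)^n. Then for all but finitely many primes 𝔭 of K, the order of (R^d mod 𝔭) divides the order of ((A·R) mod 𝔭), where R^d = (R_1^d,…,R_n^d) and (A·R)_j = ∏_{i=1}^n R_i^{A_{j i}}. -/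
open NumberField

section Aux

variable {K : Type*} [Field K] [NumberField K] {𝔭 : Ideal (𝓞 K)}

lemma redOne_one (h : 𝔭 ≠ ⊤) : RedOne K 𝔭 (1 : K) :=
  ⟨1, 1, by simpa using (Ideal.ne_top_iff_one 𝔭).mp h, by simp, by simp⟩

lemma redOne_mul [h𝔭 : 𝔭.IsPrime] {x y : K} (hx : RedOne K 𝔭 x) (hy : RedOne K 𝔭 y) :
    RedOne K 𝔭 (x * y) := by
  obtain ⟨a1, b1, hb1, he1, hm1⟩ := hx
  obtain ⟨a2, b2, hb2, he2, hm2⟩ := hy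
  refine ⟨a1 * a2, b1 * b2, fun h => ?_, ?_, ?_⟩
  · rcases h𝔭.mem_or_mem h with h | h <;> [exact hb1 h; exact hb2 h]
  · simp only [map_mul]
    rw [mul_mul_mul_comm, he1, he2]
  · have : a1 * a2 - b1 * b2 = a1 * (a2 - b2) + b2 * (a1 - b1) := by ring
    rw [this]
    exact Ideal.add_mem _ (Ideal.mul_mem_left _ _ hm2) (Ideal.mul_mem_left _ _ hm1)

lemma redOne_inv {x : K} (hx0 : x ≠ 0) (hx : RedOne K 𝔭 x) : RedOne K 𝔭 x⁻¹ := by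
  obtain ⟨a, b, hb, he, hm⟩ := hx
  have ha : a ∉ 𝔭 := fun h => hb (by simpa using Ideal.sub_mem 𝔭 h hm)
  refine ⟨b, a, ha, ?_, by simpa using 𝔭.neg_mem hm⟩
  rw [← he, mul_assoc, mul_inv_cancel₀ hx0, mul_one]

lemma redOne_pow [𝔭.IsPrime] (h : 𝔭 ≠ ⊤) {x : K} (hx : RedOne K 𝔭 x) :
    ∀ k : ℕ, RedOne K 𝔭 (x ^ k)
  | 0 => by simpa using redOne_one h
  | k + 1 => by rw [pow_succ]; exact redOne_mul (redOne_pow h hx k) hx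

lemma redOne_zpow [𝔭.IsPrime] (h : 𝔭 ≠ ⊤) (x : Kˣ) (hx : RedOne K 𝔭 (x : K)) (m : ℤ) :
    RedOne K 𝔭 ((x ^ m : Kˣ) : K) := by
  rcases le_or_gt 0 m with hm | hm
  · obtain ⟨k, hk⟩ : ∃ k : ℕ, m = (k : ℤ) := ⟨m.toNat, by omega⟩
    have : ((x ^ m : Kˣ) : K) = (x : K) ^ k := by
      rw [hk, zpow_natCast, Units.val_pow_eq_pow_val]
    rw [this]
    exact redOne_pow h hx k
  · obtain ⟨k, hk⟩ : ∃ k : ℕ, m = -(k : ℤ) := ⟨m.natAbs, by omega⟩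
    have : ((x ^ m : Kˣ) : K) = ((x : K) ^ k)⁻¹ := by
      rw [hk, zpow_neg, zpow_natCast, Units.val_inv_eq_inv_val, Units.val_pow_eq_pow_val]
    rw [this]
    exact redOne_inv (pow_ne_zero _ x.ne_zero) (redOne_pow h hx k)

lemma redOne_prod [𝔭.IsPrime] (h : 𝔭 ≠ ⊤) {ι : Type*} (s : Finset ι) (f : ι → K)
    (hf : ∀ j ∈ s, RedOne K 𝔭 (f j)) : RedOne K 𝔭 (∏ j ∈ s, f j) := by
  classical
  induction s using Finset.induction with
  | empty => simpa using redOne_one h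
  | insert _ _ hx ih =>
    rw [Finset.prod_insert hx]
    exact redOne_mul (hf _ (Finset.mem_insert_self _ _))
      (ih fun j hj => hf j (Finset.mem_insert_of_mem hj))

lemma redOrder_dvd_s9 {n : ℕ} (h𝔭 : 𝔭.IsMaximal) (P : Fin n → Kˣ) (m : ℕ) (hm : 0 < m)
    (hC : ∀ i, RedOne K 𝔭 ((P i : K) ^ m)) : redOrder K 𝔭 P ∣ m := by
  haveI : 𝔭.IsPrime := h𝔭.isPrime
  have hne : 𝔭 ≠ ⊤ := h𝔭.ne_top
  set S := {k | 0 < k ∧ ∀ i, RedOne K 𝔭 ((P i : K) ^ k)} with hS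
  have hmS : m ∈ S := ⟨hm, hC⟩
  have hSne : S.Nonempty := ⟨m, hmS⟩
  set g := sInf S with hg
  have hgS : g ∈ S := Nat.sInf_mem hSne
  have hg0 : 0 < g := hgS.1
  -- closure under multiples
  have hmul : ∀ q : ℕ, ∀ i, RedOne K 𝔭 ((P i : K) ^ (g * q)) := by
    intro q
    induction q with
    | zero => intro i; simpa using redOne_one hne
    | succ q ih =>
      intro i
      rw [Nat.mul_succ, pow_add]
      exact redOne_mul (ih i) (hgS.2 i)
  -- the remainder also satisfies the condition
  have hrem : ∀ i, RedOne K 𝔭 ((P i : K) ^ (m % g)) := by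
    intro i
    have hsplit : (P i : K) ^ m = (P i : K) ^ (g * (m / g)) * (P i : K) ^ (m % g) := by
      rw [← pow_add]
      congr 1
      exact (Nat.div_add_mod m g).symm
    have hinv : RedOne K 𝔭 (((P i : K) ^ (g * (m / g)))⁻¹) :=
      redOne_inv (pow_ne_zero _ (P i).ne_zero) (hmul (m / g) i)
    have := redOne_mul hinv (hC i)
    have heq : ((P i : K) ^ (g * (m / g)))⁻¹ * ((P i : K) ^ m) = (P i : K) ^ (m % g) := by
      rw [hsplit, ← mul_assoc, inv_mul_cancel₀ (pow_ne_zero _ (P i).ne_zero), one_mul]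
    rwa [heq] at this
  have hmod : m % g = 0 := by
    by_contra hne0
    have : m % g ∈ S := ⟨Nat.pos_of_ne_zero hne0, hrem⟩
    have := Nat.sInf_le this
    have hlt := Nat.mod_lt m hg0
    omega
  exact Nat.dvd_of_mod_eq_zero hmod

lemma units_zpow_sum {ι : Type*} (s : Finset ι) (x : Kˣ) (f : ι → ℤ) :
    ∏ j ∈ s, x ^ f j = x ^ (∑ j ∈ s, f j) := by
  classical
  induction s using Finset.induction with
  | empty => simp
  | insert _ _ hx ih => rw [Finset.prod_insert hx, Finset.sum_insert hx, zpow_add, ih]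

end Aux

/-- Lemma 4 in the split-torus case: if `B * A = d • 1` then for all but finitely many
primes `𝔭` the order of `(R^d mod 𝔭)` divides the order of `(A·R mod 𝔭)`. -/
theorem isogeny_order_divides_split_torus
    {K : Type*} [Field K] [NumberField K] {n : ℕ}
    (A B : Matrix (Fin n) (Fin n) ℤ) (d : ℤ) (hd : d ≠ 0)
    (hBA : B * A = d • (1 : Matrix (Fin n) (Fin n) ℤ))
    (R : Fin n → Kˣ) :
    ∃ T : Finset (Ideal (𝓞 K)), ∀ 𝔭 : Ideal (𝓞 K), 𝔭.IsMaximal → 𝔭 ∉ T →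
      redOrder K 𝔭 (fun i => R i ^ d) ∣ redOrder K 𝔭 (fun j => ∏ i, R i ^ A j i) := by
  refine ⟨∅, fun 𝔭 h𝔭 _ => ?_⟩
  haveI : 𝔭.IsPrime := h𝔭.isPrime
  have hne : 𝔭 ≠ ⊤ := h𝔭.ne_top
  set m := redOrder K 𝔭 (fun j => ∏ i, R i ^ A j i) with hm
  rcases Nat.eq_zero_or_pos m with hm0 | hm0
  · rw [hm0]; exact dvd_zero _
  -- m is in the defining set
  have hSne : {k | 0 < k ∧ ∀ j, RedOne K 𝔭 (((∏ i, R i ^ A j i : Kˣ) : K) ^ k)}.Nonempty := by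
    by_contra hc
    rw [Set.not_nonempty_iff_eq_empty] at hc
    rw [hm, redOrder, hc] at hm0
    simp at hm0
  have hmS := Nat.sInf_mem hSne
  rw [show sInf {k | 0 < k ∧ ∀ j, RedOne K 𝔭 (((∏ i, R i ^ A j i : Kˣ) : K) ^ k)} = m from rfl]
    at hmS
  obtain ⟨-, hmRed⟩ := hmS
  -- key algebraic identity in Kˣ
  have key : ∀ i, ((R i ^ d : Kˣ) : K) ^ m =
      ((∏ j, (∏ l, R l ^ A j l) ^ ((m : ℤ) * B i j) : Kˣ) : K) := by
    intro i
    have : (R i ^ d) ^ m = ∏ j, (∏ l, R l ^ A j l) ^ ((m : ℤ) * B i j) := by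
      have step : ∀ j, (∏ l, R l ^ A j l) ^ ((m : ℤ) * B i j)
          = ∏ l, R l ^ (A j l * ((m : ℤ) * B i j)) := by
        intro j
        rw [← Finset.prod_zpow]
        congr 1; ext l
        rw [← zpow_mul]
      simp_rw [step]
      rw [Finset.prod_comm]
      have : ∀ l, ∏ j, R l ^ (A j l * ((m : ℤ) * B i j))
          = R l ^ ((m : ℤ) * (B * A) i l) := by
        intro l
        rw [units_zpow_sum]
        congr 1
        rw [Matrix.mul_apply, Finset.mul_sum]
        congr 1; ext j; ring
      simp_rw [this, hBA]
      have hone : ∀ l, ((d • (1 : Matrix (Fin n) (Fin n) ℤ)) i l) =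
          if i = l then d else 0 := by
        intro l
        by_cases h : i = l <;> simp [Matrix.smul_apply, Matrix.one_apply, h]
      simp_rw [hone]
      rw [Finset.prod_eq_single i (fun l _ hl => by rw [if_neg (Ne.symm hl)]; simp)
        (fun h => absurd (Finset.mem_univ i) h)]
      rw [if_pos rfl, ← zpow_natCast (R i ^ d) m, ← zpow_mul, mul_comm]
    rw [← Units.val_pow_eq_pow_val, this]
  -- conclude
  refine redOrder_dvd_s9 h𝔭 _ m hm0 (fun i => ?_)
  rw [key i, Units.coe_prod]
  refine redOne_prod hne Finset.univ _ (fun j _ => ?_)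
  have h1 : RedOne K 𝔭 ((((∏ l, R l ^ A j l) ^ (m : ℤ) : Kˣ)) : K) := by
    have := hmRed j
    rwa [← Units.val_pow_eq_pow_val, ← zpow_natCast] at this
  have := redOne_zpow hne ((∏ l, R l ^ A j l) ^ (m : ℤ)) h1 (B i j)
  rwa [← zpow_mul] at this
end

section
/- Let P = (P_1,…,P_n) ∈ (K^×)^n and suppose that not every coordinate P_i is a root of unity. Then there exist a nonempty subset J = {j_1 < … < j_s} of {1,…,n} and a nonzero integer d such that P_{j_1},…,P_{j_s} are multiplicatively independent and, for all but finitely many primes 𝔭 of K, the order of (P mod 𝔭) divides d times the order of (P' mod 𝔭), where P' = (P_{j_1},…,P_{j_s}) ∈ (K^×)^s. -/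
open NumberField

/-- The units of `K` that reduce to `1` modulo a maximal ideal `𝔭` form a subgroup. -/
def redSub (K : Type*) [Field K] [NumberField K] (𝔭 : Ideal (𝓞 K)) (h𝔭 : 𝔭.IsMaximal) :
    Subgroup Kˣ where
  carrier := {u : Kˣ | RedOne K 𝔭 (u : K)}
  one_mem' := by
    refine ⟨1, 1, ?_, by simp, by simp⟩
    simpa using (Ideal.ne_top_iff_one 𝔭).mp h𝔭.ne_top
  mul_mem' := by
    rintro u v ⟨a₁, b₁, hb₁, he₁, hm₁⟩ ⟨a₂, b₂, hb₂, he₂, hm₂⟩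
    refine ⟨a₁ * a₂, b₁ * b₂, ?_, ?_, ?_⟩
    · intro hmem
      rcases h𝔭.isPrime.mem_or_mem hmem with h | h
      exacts [hb₁ h, hb₂ h]
    · rw [map_mul, map_mul, Units.val_mul,
        show (algebraMap (𝓞 K) K b₁ * algebraMap (𝓞 K) K b₂) * ((u : K) * (v : K))
          = (algebraMap (𝓞 K) K b₁ * (u : K)) * (algebraMap (𝓞 K) K b₂ * (v : K)) by ring,
        he₁, he₂]
    · have h : a₁ * a₂ - b₁ * b₂ = (a₁ - b₁) * a₂ + b₁ * (a₂ - b₂) := by ring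
      rw [h]
      exact Ideal.add_mem _ (Ideal.mul_mem_right _ _ hm₁) (Ideal.mul_mem_left _ _ hm₂)
  inv_mem' := by
    rintro u ⟨a, b, hb, he, hm⟩
    have ha : a ∉ 𝔭 := fun haa => hb (by simpa using Ideal.sub_mem 𝔭 haa hm)
    refine ⟨b, a, ha, ?_, by simpa using neg_mem hm⟩
    have hu : (u : K) ≠ 0 := Units.ne_zero u
    rw [Units.val_inv_eq_inv_val, mul_inv_eq_iff_eq_mul₀ hu, ← he]

lemma mem_redSub {K : Type*} [Field K] [NumberField K] {𝔭 : Ideal (𝓞 K)} {h𝔭 : 𝔭.IsMaximal}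
    {u : Kˣ} : u ∈ redSub K 𝔭 h𝔭 ↔ RedOne K 𝔭 (u : K) := Iff.rfl

lemma redOrder_dvd_s11 {K : Type*} [Field K] [NumberField K] {n : ℕ} {𝔭 : Ideal (𝓞 K)}
    (h𝔭 : 𝔭.IsMaximal) (P : Fin n → Kˣ) {N : ℕ} (hN : 0 < N)
    (h : ∀ i, P i ^ N ∈ redSub K 𝔭 h𝔭) : redOrder K 𝔭 P ∣ N := by
  have hNmem : N ∈ {k | 0 < k ∧ ∀ i, RedOne K 𝔭 ((P i : K) ^ k)} :=
    ⟨hN, fun i => by simpa [mem_redSub, Units.val_pow_eq_pow_val] using h i⟩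
  set T := {k | 0 < k ∧ ∀ i, RedOne K 𝔭 ((P i : K) ^ k)} with hT
  have hTne : T.Nonempty := ⟨N, hNmem⟩
  have hmem := Nat.sInf_mem hTne
  set t := sInf T with ht
  have htpos : 0 < t := hmem.1
  have htS : ∀ i, P i ^ t ∈ redSub K 𝔭 h𝔭 := fun i => by
    have := hmem.2 i
    simpa [mem_redSub, Units.val_pow_eq_pow_val] using this
  have hr : ∀ i, P i ^ (N % t) ∈ redSub K 𝔭 h𝔭 := by
    intro i
    have h1 : P i ^ N = (P i ^ t) ^ (N / t) * P i ^ (N % t) := by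
      rw [← pow_mul, ← pow_add, Nat.div_add_mod]
    have h2 : P i ^ (N % t) = ((P i ^ t) ^ (N / t))⁻¹ * P i ^ N := by
      rw [h1]; group
    rw [h2]
    exact mul_mem (inv_mem (pow_mem (htS i) _)) (h i)
  by_cases hr0 : N % t = 0
  · exact Nat.dvd_of_mod_eq_zero hr0
  · exfalso
    have hmm : N % t ∈ T := ⟨Nat.pos_of_ne_zero hr0, fun i => by
      simpa [mem_redSub, Units.val_pow_eq_pow_val] using hr i⟩
    have h1 := Nat.sInf_le hmm
    have h2 := Nat.mod_lt N htpos
    omega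

lemma prod_fin_eq {M : Type*} [CommMonoid M] {n : ℕ} (J : Finset (Fin n)) (f : Fin n → M) :
    ∏ i : Fin J.card, f (J.orderEmbOfFin rfl i) = ∏ k ∈ J, f k := by
  rw [← Finset.prod_coe_sort J f]
  exact Fintype.prod_equiv (J.orderIsoOfFin rfl).toEquiv _ _
    (fun i => congrArg f (Finset.coe_orderIsoOfFin_apply J rfl i).symm)

/-- Lemma 6 in the split-torus case: a point not entirely made of roots of unity is
controlled, up to a bounded factor `d`, by a multiplicatively independent subtuple of
its coordinates. -/
theorem order_controlled_by_independent_subtuple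
    {K : Type*} [Field K] [NumberField K] {n : ℕ}
    (P : Fin n → Kˣ) (hP : ∃ i, ¬ IsOfFinOrder (P i)) :
    ∃ (s : ℕ) (j : Fin s → Fin n), 0 < s ∧ StrictMono j ∧
      (∀ a : Fin s → ℤ, (∏ i, P (j i) ^ a i) = 1 → a = 0) ∧
      ∃ d : ℤ, d ≠ 0 ∧
        ∃ T : Finset (Ideal (𝓞 K)), ∀ 𝔭 : Ideal (𝓞 K), 𝔭.IsMaximal → 𝔭 ∉ T →
          (redOrder K 𝔭 P : ℤ) ∣ d * (redOrder K 𝔭 (fun i => P (j i)) : ℤ) := by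
  classical
  obtain ⟨i₀, hi₀⟩ := hP
  -- the independence predicate on finsets of coordinates
  set Indep : Finset (Fin n) → Prop := fun J =>
    ∀ a : Fin n → ℤ, (∏ k ∈ J, P k ^ a k) = 1 → ∀ k ∈ J, a k = 0 with hIndep
  have hsingle : Indep {i₀} := by
    intro a ha k hk
    rw [Finset.mem_singleton] at hk
    subst hk
    rw [Finset.prod_singleton] at ha
    have h0 : orderOf (P k) = 0 := orderOf_eq_zero_iff.mpr hi₀
    have h2 : ((orderOf (P k) : ℤ)) ∣ a k := orderOf_dvd_iff_zpow_eq_one.mpr ha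
    simpa [h0] using h2
  -- pick a maximal independent finset
  set C : Finset (Finset (Fin n)) := Finset.univ.filter Indep with hC
  have hCne : C.Nonempty := ⟨{i₀}, Finset.mem_filter.mpr ⟨Finset.mem_univ _, hsingle⟩⟩
  obtain ⟨J, hJC, hJmax⟩ := C.exists_max_image Finset.card hCne
  have hJ : Indep J := (Finset.mem_filter.mp hJC).2
  have hJcard : 0 < J.card := by
    have := hJmax {i₀} (Finset.mem_filter.mpr ⟨Finset.mem_univ _, hsingle⟩)
    simpa using this
  -- relations: every coordinate has a nonzero power in the group generated by J
  have hrel : ∀ i, ∃ c : ℤ, c ≠ 0 ∧ ∃ a : Fin n → ℤ, P i ^ c = ∏ k ∈ J, P k ^ a k := by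
    intro i
    by_cases hiJ : i ∈ J
    · refine ⟨1, one_ne_zero, fun k => if k = i then 1 else 0, ?_⟩
      rw [Finset.prod_congr rfl (fun k _ => show P k ^ (if k = i then (1:ℤ) else 0)
          = if k = i then P k else 1 by split <;> simp_all)]
      simp [Finset.prod_ite_eq', hiJ]
    · have hnind : ¬ Indep (insert i J) := by
        intro hind
        have hc : (insert i J).card ≤ J.card :=
          hJmax _ (Finset.mem_filter.mpr ⟨Finset.mem_univ _, hind⟩)
        rw [Finset.card_insert_of_notMem hiJ] at hc
        omega
      have hnind' : ¬ ∀ a : Fin n → ℤ, (∏ k ∈ insert i J, P k ^ a k) = 1 →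
          ∀ k ∈ insert i J, a k = 0 := hnind
      push_neg at hnind'
      obtain ⟨a, ha1, k, hk, hak⟩ := hnind'
      have hai : a i ≠ 0 := by
        intro h0
        rw [Finset.prod_insert hiJ, h0, zpow_zero, one_mul] at ha1
        have hz := hJ a ha1
        rcases Finset.mem_insert.mp hk with rfl | hk'
        · exact hak h0
        · exact hak (hz k hk')
      refine ⟨a i, hai, fun k => -a k, ?_⟩
      rw [Finset.prod_insert hiJ] at ha1
      have : P i ^ a i = (∏ k ∈ J, P k ^ a k)⁻¹ := by
        rw [eq_inv_iff_mul_eq_one]; exact ha1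
      rw [this, ← Finset.prod_inv_distrib]
      exact Finset.prod_congr rfl (fun k _ => (zpow_neg _ _).symm)
  choose c hc0 a ha using hrel
  -- set up the subtuple
  refine ⟨J.card, J.orderEmbOfFin rfl, hJcard, (J.orderEmbOfFin rfl).strictMono, ?_, ?_⟩
  · -- independence of the subtuple
    intro b hb
    set b' : Fin n → ℤ := fun k => if hk : k ∈ J then b ((J.orderIsoOfFin rfl).symm ⟨k, hk⟩)
      else 0 with hb'
    have hbj : ∀ i : Fin J.card, b' (J.orderEmbOfFin rfl i) = b i := by
      intro i
      have hmem : J.orderEmbOfFin rfl i ∈ J := Finset.orderEmbOfFin_mem J rfl i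
      simp only [hb', dif_pos hmem]
      congr 1
      rw [OrderIso.symm_apply_eq]
      exact Subtype.ext (Finset.coe_orderIsoOfFin_apply J rfl i).symm
    have hprod : ∏ k ∈ J, P k ^ b' k = 1 := by
      rw [← prod_fin_eq J (fun k => P k ^ b' k)]
      rw [show (∏ i : Fin J.card, P (J.orderEmbOfFin rfl i) ^ b' (J.orderEmbOfFin rfl i))
          = ∏ i : Fin J.card, P (J.orderEmbOfFin rfl i) ^ b i from
        Finset.prod_congr rfl (fun i _ => by rw [hbj i])]
      exact hb
    have hz := hJ b' hprod
    funext i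
    have hmem : J.orderEmbOfFin rfl i ∈ J := Finset.orderEmbOfFin_mem J rfl i
    have := hz _ hmem
    rw [hbj i] at this
    exact this
  · -- the divisibility
    refine ⟨∏ i, c i, Finset.prod_ne_zero_iff.mpr (fun i _ => hc0 i), ∅, ?_⟩
    intro 𝔭 h𝔭 _
    set d : ℤ := ∏ i, c i with hd
    have hdne : d ≠ 0 := Finset.prod_ne_zero_iff.mpr (fun i _ => hc0 i)
    set m := redOrder K 𝔭 (fun i => P (J.orderEmbOfFin rfl i)) with hm
    by_cases hm0 : m = 0
    · rw [hm0]; simp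
    · have hmpos : 0 < m := Nat.pos_of_ne_zero hm0
      set S := redSub K 𝔭 h𝔭 with hS
      -- m belongs to the defining set
      have hTne : {k | 0 < k ∧
          ∀ i, RedOne K 𝔭 ((P (J.orderEmbOfFin rfl i) : K) ^ k)}.Nonempty := by
        by_contra hcon
        rw [Set.not_nonempty_iff_eq_empty] at hcon
        have : m = 0 := by
          rw [hm, redOrder, hcon, Nat.sInf_empty]
        exact hm0 this
      have hmmem := Nat.sInf_mem hTne
      have hjm : ∀ i : Fin J.card, P (J.orderEmbOfFin rfl i) ^ m ∈ S := by
        intro i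
        have := hmmem.2 i
        rw [mem_redSub]
        simpa [Units.val_pow_eq_pow_val, hm, redOrder] using this
      -- every P k for k ∈ J satisfies P k ^ m ∈ S
      have hJm : ∀ k ∈ J, P k ^ m ∈ S := by
        intro k hk
        have : k = J.orderEmbOfFin rfl ((J.orderIsoOfFin rfl).symm ⟨k, hk⟩) := by
          rw [← Finset.coe_orderIsoOfFin_apply J rfl, OrderIso.apply_symm_apply]
        rw [this]
        exact hjm _
      -- P i ^ (c i * m) ∈ S for every i
      have hkey : ∀ i, P i ^ ((c i * (m : ℤ))) ∈ S := by
        intro i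
        rw [zpow_mul, ha i]
        rw [show ((∏ k ∈ J, P k ^ a i k) ^ (m : ℤ)) = ∏ k ∈ J, (P k ^ (m :ℤ)) ^ (a i k) by
          rw [← Finset.prod_zpow]
          exact Finset.prod_congr rfl (fun k _ => by
            rw [← zpow_mul, ← zpow_mul, mul_comm])]
        exact Subgroup.prod_mem S (fun k hk => Subgroup.zpow_mem S
          (by rw [zpow_natCast]; exact hJm k hk) _)
      -- hence P i ^ (|d| * m) ∈ S
      have hN : ∀ i, P i ^ (d.natAbs * m) ∈ S := by
        intro i
        have hdvd : (c i * (m : ℤ)) ∣ ((d.natAbs * m : ℕ) : ℤ) := by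
          rw [Nat.cast_mul]
          exact mul_dvd_mul (Int.dvd_natAbs.mpr (Finset.dvd_prod_of_mem c (Finset.mem_univ i)))
            dvd_rfl
        obtain ⟨e, he⟩ := hdvd
        rw [← zpow_natCast, he, zpow_mul]
        exact Subgroup.zpow_mem S (hkey i) e
      have hNpos : 0 < d.natAbs * m := Nat.mul_pos (Int.natAbs_pos.mpr hdne) hmpos
      have hdvdN : redOrder K 𝔭 P ∣ d.natAbs * m := redOrder_dvd_s11 h𝔭 P hNpos hN
      have hfin : ((d.natAbs * m : ℕ) : ℤ) ∣ d * (m : ℤ) := by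
        rw [Nat.cast_mul]
        exact mul_dvd_mul (Int.natAbs_dvd.mpr dvd_rfl) dvd_rfl
      exact (Int.natCast_dvd_natCast.mpr hdvdN).trans hfin
end

section
/- Let ℓ be a rational prime, let R ∈ K^× not be a root of unity, let ζ ∈ K^× be a primitive ℓ-th root of unity, and fix h ∈ ℕ. Set P = (R^{ℓ^h}, ζ) and Q = (R, 1) in (K^×)^2. Then: (a) for every rational prime p and all but finitely many primes 𝔭 of K, if p does not divide the order of (P mod 𝔭) then p does not divide the order of (Q mod 𝔭); and (b) for every A ∈ M_2(ℤ) and every integer c, if A·P = Q^c coordinatewise (that is, R^{ℓ^h A_{11}} ζ^{A_{12}} = R^c and R^{ℓ^h A_{21}} ζ^{A_{22}} = 1), then ℓ^h divides c. -/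
open NumberField

section Aux

variable {K : Type*} [Field K] [NumberField K]

/-- The subgroup of `Kˣ` of elements reducing to `1` mod `𝔭`. -/
def redSubgroup (𝔭 : Ideal (𝓞 K)) (h𝔭 : 𝔭.IsPrime) : Subgroup Kˣ where
  carrier := {x : Kˣ | RedOne K 𝔭 (x : K)}
  one_mem' := by
    refine ⟨1, 1, fun hm => h𝔭.ne_top ((Ideal.eq_top_iff_one 𝔭).2 hm), by simp, by simp⟩
  mul_mem' := by
    rintro x y ⟨a, b, hb, hab, hm⟩ ⟨c, d, hd, hcd, hm'⟩
    refine ⟨a * c, b * d, ?_, ?_, ?_⟩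
    · intro hmem
      rcases h𝔭.mem_or_mem hmem with hh | hh
      · exact hb hh
      · exact hd hh
    · rw [map_mul, map_mul, Units.val_mul]
      calc algebraMap (𝓞 K) K b * algebraMap (𝓞 K) K d * ((x : K) * (y : K))
          = (algebraMap (𝓞 K) K b * (x : K)) * (algebraMap (𝓞 K) K d * (y : K)) := by ring
        _ = algebraMap (𝓞 K) K a * algebraMap (𝓞 K) K c := by rw [hab, hcd]
    · have hrw : a * c - b * d = (a - b) * c + b * (c - d) := by ring
      rw [hrw]
      exact Ideal.add_mem _ (Ideal.mul_mem_right _ _ hm) (Ideal.mul_mem_left _ _ hm')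
  inv_mem' := by
    rintro x ⟨a, b, hb, hab, hm⟩
    have ha : a ∉ 𝔭 := by
      intro hha
      exact hb (by simpa using 𝔭.sub_mem hha hm)
    refine ⟨b, a, ha, ?_, ?_⟩
    · have hxne : (x : K) ≠ 0 := x.ne_zero
      rw [← hab, Units.val_inv_eq_inv_val, mul_assoc, mul_inv_cancel₀ hxne, mul_one]
    · have hrw : b - a = -(a - b) := by ring
      rw [hrw]
      exact 𝔭.neg_mem hm

lemma orderOf_eq_sInf' {G : Type*} [Monoid G] (x : G) :
    orderOf x = sInf {k | 0 < k ∧ x ^ k = 1} := by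
  by_cases hfin : IsOfFinOrder x
  · have h1 : orderOf x ∈ {k | 0 < k ∧ x ^ k = 1} :=
      ⟨hfin.orderOf_pos, pow_orderOf_eq_one x⟩
    have hle : sInf {k | 0 < k ∧ x ^ k = 1} ≤ orderOf x := Nat.sInf_le h1
    have hmem : sInf {k | 0 < k ∧ x ^ k = 1} ∈ {k | 0 < k ∧ x ^ k = 1} :=
      Nat.sInf_mem ⟨_, h1⟩
    have hdvd : orderOf x ∣ sInf {k | 0 < k ∧ x ^ k = 1} :=
      orderOf_dvd_of_pow_eq_one hmem.2
    exact le_antisymm (Nat.le_of_dvd hmem.1 hdvd) hle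
  · rw [orderOf_eq_zero hfin]
    symm
    rw [Nat.sInf_eq_zero]
    right
    rw [Set.eq_empty_iff_forall_notMem]
    rintro k ⟨hk, hk1⟩
    exact hfin (isOfFinOrder_iff_pow_eq_one.2 ⟨k, hk, hk1⟩)

lemma redOrder_eq_orderOf (𝔭 : Ideal (𝓞 K)) (h𝔭 : 𝔭.IsPrime) {n : ℕ} (P : Fin n → Kˣ) :
    redOrder K 𝔭 P =
      orderOf (fun i => ((P i : Kˣ ⧸ redSubgroup 𝔭 h𝔭))) := by
  rw [orderOf_eq_sInf', redOrder]
  congr 1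
  ext k
  simp only [Set.mem_setOf_eq]
  refine and_congr_right fun _ => ?_
  rw [funext_iff]
  refine forall_congr' fun i => ?_
  simp only [Pi.pow_apply, Pi.one_apply, ← QuotientGroup.mk_pow, QuotientGroup.eq_one_iff]
  have : ((P i : K) ^ k) = (((P i) ^ k : Kˣ) : K) := by rw [Units.val_pow_eq_pow_val]
  rw [this]
  exact Iff.rfl

lemma orderOf_fin_two {G : Type*} [Monoid G] (f : Fin 2 → G) :
    orderOf f = Nat.lcm (orderOf (f 0)) (orderOf (f 1)) := by
  apply Nat.dvd_antisymm
  · rw [orderOf_dvd_iff_pow_eq_one]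
    funext i
    simp only [Pi.pow_apply, Pi.one_apply]
    have h0 : (f 0) ^ Nat.lcm (orderOf (f 0)) (orderOf (f 1)) = 1 :=
      orderOf_dvd_iff_pow_eq_one.1 (Nat.dvd_lcm_left _ _)
    have h1 : (f 1) ^ Nat.lcm (orderOf (f 0)) (orderOf (f 1)) = 1 :=
      orderOf_dvd_iff_pow_eq_one.1 (Nat.dvd_lcm_right _ _)
    fin_cases i <;> assumption
  · have key : ∀ i, (f i) ^ orderOf f = 1 := by
      intro i
      have := congrFun (pow_orderOf_eq_one f) i
      simpa using this
    exact Nat.lcm_dvd (orderOf_dvd_of_pow_eq_one (key 0)) (orderOf_dvd_of_pow_eq_one (key 1))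

end Aux

/-- Example 12 in the multiplicative-group case: `P = (R^{ℓ^h}, ζ)` and `Q = (R, 1)`
satisfy condition (RSP) for the set of all rational primes, yet every admissible
constant `c` is divisible by `ℓ^h`. -/
theorem rsp_example_unbounded_valuation
    {K : Type*} [Field K] [NumberField K]
    (ℓ : ℕ) (hℓ : ℓ.Prime) (R : Kˣ) (hR : ¬ IsOfFinOrder R)
    (ζ : Kˣ) (hζ : IsPrimitiveRoot ζ ℓ) (h : ℕ)
    (P Q : Fin 2 → Kˣ) (hP : P = ![R ^ (ℓ ^ h), ζ]) (hQ : Q = ![R, 1]) :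
    (∀ p : ℕ, p.Prime →
      ∃ T : Finset (Ideal (𝓞 K)), ∀ 𝔭 : Ideal (𝓞 K), 𝔭.IsMaximal → 𝔭 ∉ T →
        ¬ p ∣ redOrder K 𝔭 P → ¬ p ∣ redOrder K 𝔭 Q) ∧
    (∀ (A : Matrix (Fin 2) (Fin 2) ℤ) (c : ℤ),
      (∀ j, (∏ i, P i ^ A j i) = Q j ^ c) → (ℓ : ℤ) ^ h ∣ c) := by
  have hζK : IsPrimitiveRoot ((ζ : K)) ℓ := IsPrimitiveRoot.coe_units_iff.2 hζ
  have hζint : IsIntegral ℤ ((ζ : K)) := hζK.isIntegral hℓ.pos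
  set z0 : 𝓞 K := ⟨(ζ : K), hζint⟩ with hz0
  have hz0coe : (algebraMap (𝓞 K) K) z0 = (ζ : K) := rfl
  have hζne1 : (ζ : K) ≠ 1 := by
    intro h1
    have : ℓ ∣ 1 := hζK.dvd_of_pow_eq_one 1 (by rw [pow_one, h1])
    exact hℓ.one_lt.ne' (Nat.eq_one_of_dvd_one this ▸ rfl)
  have hz0ne : z0 - 1 ≠ 0 := by
    intro h0
    apply hζne1
    have : z0 = 1 := by rwa [sub_eq_zero] at h0
    have := congrArg (algebraMap (𝓞 K) K) this
    simpa [hz0coe] using this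
  constructor
  · -- part (a)
    intro p hp
    -- the finite bad set: primes containing `z0 - 1`
    have hspan : Ideal.span {z0 - 1} ≠ 0 := by
      simpa [Submodule.zero_eq_bot, Ideal.span_singleton_eq_bot] using hz0ne
    haveI := UniqueFactorizationMonoid.fintypeSubtypeDvd (Ideal.span {z0 - 1}) hspan
    have hfin : {𝔭 : Ideal (𝓞 K) | z0 - 1 ∈ 𝔭}.Finite := by
      refine Set.Finite.subset (Set.finite_range
        (fun d : {I : Ideal (𝓞 K) // I ∣ Ideal.span {z0 - 1}} => (d : Ideal (𝓞 K)))) ?_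
      intro 𝔭 h𝔭mem
      have hdvd : 𝔭 ∣ Ideal.span {z0 - 1} := by
        rw [Ideal.dvd_iff_le]
        rwa [Ideal.span_le, Set.singleton_subset_iff]
      exact ⟨⟨𝔭, hdvd⟩, rfl⟩
    refine ⟨hfin.toFinset, ?_⟩
    intro 𝔭 hmax hT hnp hdvdQ
    apply hnp
    have h𝔭 : 𝔭.IsPrime := hmax.isPrime
    -- orders in the quotient group
    set G := redSubgroup 𝔭 h𝔭 with hG
    set r : Kˣ ⧸ G := (R : Kˣ ⧸ G) with hr
    set z : Kˣ ⧸ G := (ζ : Kˣ ⧸ G) with hzdef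
    have hPord : redOrder K 𝔭 P = Nat.lcm (orderOf (r ^ (ℓ ^ h))) (orderOf z) := by
      rw [redOrder_eq_orderOf 𝔭 h𝔭 P, orderOf_fin_two]
      congr 1
      · rw [hP]
        simp only [Matrix.cons_val_zero]
        rw [QuotientGroup.mk_pow]
      · rw [hP]
        simp only [Matrix.cons_val_one, Matrix.head_cons, Matrix.cons_val_zero]
        rfl
    have hQord : redOrder K 𝔭 Q = orderOf r := by
      rw [redOrder_eq_orderOf 𝔭 h𝔭 Q, orderOf_fin_two]
      rw [hQ]
      simp only [Matrix.cons_val_zero, Matrix.cons_val_one, Matrix.head_cons,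
        QuotientGroup.mk_one, orderOf_one, Nat.lcm_one_right]
      rfl
    -- the order of ζ in the quotient is exactly ℓ
    have hzpow : z ^ ℓ = 1 := by
      rw [hzdef, ← QuotientGroup.mk_pow, hζ.pow_eq_one, QuotientGroup.mk_one]
    have hzne : z ≠ 1 := by
      intro he
      apply hT
      rw [Set.Finite.mem_toFinset]
      have hmem : ζ ∈ G := (QuotientGroup.eq_one_iff _).1 he
      obtain ⟨a, b, hb, hab, hm⟩ := hmem
      have hab' : a = b * z0 := by
        apply NumberField.RingOfIntegers.ext
        rw [RingOfIntegers.coe_eq_algebraMap, RingOfIntegers.coe_eq_algebraMap,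
          map_mul, hz0coe, ← hab]
      have : a - b = b * (z0 - 1) := by rw [hab']; ring
      have hmem' : b * (z0 - 1) ∈ 𝔭 := this ▸ hm
      rcases h𝔭.mem_or_mem hmem' with hh | hh
      · exact absurd hh hb
      · exact hh
    have hzord : orderOf z = ℓ := by
      have hd : orderOf z ∣ ℓ := orderOf_dvd_of_pow_eq_one hzpow
      rcases hℓ.eq_one_or_self_of_dvd _ hd with h1 | h1
      · exact absurd (orderOf_eq_one_iff.1 h1) hzne
      · exact h1
    rw [hQord] at hdvdQ
    rw [hPord, hzord]
    -- now: p ∣ orderOf r implies p ∣ lcm (orderOf (r ^ ℓ^h)) ℓ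
    by_cases hpl : p = ℓ
    · exact hpl ▸ Nat.dvd_lcm_right _ _
    · refine Nat.dvd_trans ?_ (Nat.dvd_lcm_left _ _)
      rw [orderOf_pow' r (pow_ne_zero h hℓ.ne_zero)]
      set m := orderOf r
      have hg : Nat.gcd m (ℓ ^ h) ∣ m := Nat.gcd_dvd_left _ _
      have hmul : m / Nat.gcd m (ℓ ^ h) * Nat.gcd m (ℓ ^ h) = m := Nat.div_mul_cancel hg
      have hpd : p ∣ m / Nat.gcd m (ℓ ^ h) * Nat.gcd m (ℓ ^ h) := by rw [hmul]; exact hdvdQ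
      rcases (Nat.Prime.dvd_mul hp).1 hpd with h' | h'
      · exact h'
      · exfalso
        have hpl' : p ∣ ℓ ^ h := h'.trans (Nat.gcd_dvd_right _ _)
        exact hpl ((Nat.prime_dvd_prime_iff_eq hp hℓ).1 (hp.dvd_of_dvd_pow hpl'))
  · -- part (b)
    intro A c hA
    have h0 := hA 0
    rw [hP, hQ] at h0
    rw [Fin.prod_univ_two] at h0
    simp only [Matrix.cons_val_zero, Matrix.cons_val_one, Matrix.head_cons] at h0
    -- h0 : (R ^ ℓ ^ h) ^ A 0 0 * ζ ^ A 0 1 = R ^ c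
    have hpow : ((R ^ (ℓ ^ h)) ^ (A 0 0) : Kˣ) = R ^ ((ℓ : ℤ) ^ h * A 0 0) := by
      rw [← zpow_natCast R (ℓ ^ h), ← zpow_mul]
      push_cast
      ring_nf
    rw [hpow] at h0
    have key : (ζ : Kˣ) ^ (A 0 1) = R ^ (c - (ℓ : ℤ) ^ h * A 0 0) := by
      rw [show c - (ℓ : ℤ) ^ h * A 0 0 = -((ℓ : ℤ) ^ h * A 0 0) + c by ring,
        zpow_add, zpow_neg, ← h0, inv_mul_cancel_left]
    have hζfo : IsOfFinOrder ζ := isOfFinOrder_iff_pow_eq_one.2 ⟨ℓ, hℓ.pos, hζ.pow_eq_one⟩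
    have hfo : IsOfFinOrder (R ^ (c - (ℓ : ℤ) ^ h * A 0 0)) := key ▸ hζfo.zpow
    by_cases hc : c - (ℓ : ℤ) ^ h * A 0 0 = 0
    · exact ⟨A 0 0, by linarith⟩
    · exfalso
      apply hR
      obtain ⟨m, hm, hm1⟩ := isOfFinOrder_iff_zpow_eq_one.1 hfo
      rw [← zpow_mul] at hm1
      exact isOfFinOrder_iff_zpow_eq_one.2 ⟨_, mul_ne_zero hc hm, hm1⟩
end

section
/- Let S be a nonempty finite set of rational primes and let m be the product of the primes in S. Let ζ ∈ K^× be a primitive m-th root of unity and let R, W ∈ K^× be multiplicatively independent. Set P = (R, ζ) and Q = (W, 1) in (K^×)^2. Then: (a) for all but finitely many primes 𝔭 of K, m divides the order of (P mod 𝔭) (so for every ℓ ∈ S the condition 'ℓ ∤ order of (P mod 𝔭) implies ℓ ∤ order of (Q mod 𝔭)' holds vacuously); and (b) there is no matrix A ∈ M_2(ℤ) and nonzero integer c with A·P = Q^c coordinatewise, i.e. no nonzero power of Q lies in the M_2(ℤ)-orbit of P. -/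
open NumberField

/-- Only finitely many primes of `K` contain a fixed nonzero integer `x`. -/
lemma finite_primes_containing {K : Type*} [Field K] [NumberField K]
    (x : 𝓞 K) (hx : x ≠ 0) : {𝔭 : Ideal (𝓞 K) | 𝔭 ∣ Ideal.span {x}}.Finite := by
  haveI := UniqueFactorizationMonoid.fintypeSubtypeDvd (Ideal.span {x})
    (by simpa [Ideal.span_singleton_eq_bot] using hx)
  rw [← Set.finite_coe_iff]
  exact Finite.of_fintype {𝔭 : Ideal (𝓞 K) // 𝔭 ∣ Ideal.span {x}}

/-- The example of Section 4: the set `S` in condition (RSP) needs in general to be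
infinite, in the multiplicative-group case. -/
theorem rsp_finite_S_counterexample
    {K : Type*} [Field K] [NumberField K]
    (S : Finset ℕ) (hSne : S.Nonempty) (hSprime : ∀ ℓ ∈ S, ℓ.Prime)
    (m : ℕ) (hm : m = ∏ ℓ ∈ S, ℓ)
    (ζ : Kˣ) (hζ : IsPrimitiveRoot ζ m)
    (R W : Kˣ) (hind : ∀ a b : ℤ, R ^ a * W ^ b = 1 → a = 0 ∧ b = 0)
    (P Q : Fin 2 → Kˣ) (hP : P = ![R, ζ]) (hQ : Q = ![W, 1]) :
    (∃ T : Finset (Ideal (𝓞 K)), ∀ 𝔭 : Ideal (𝓞 K), 𝔭.IsMaximal → 𝔭 ∉ T →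
      m ∣ redOrder K 𝔭 P) ∧
    ¬ ∃ (A : Matrix (Fin 2) (Fin 2) ℤ) (c : ℤ), c ≠ 0 ∧
      ∀ j, (∏ i, P i ^ A j i) = Q j ^ c := by
  have hm0 : 0 < m := by
    rw [hm]; exact Finset.prod_pos fun ℓ hℓ => (hSprime ℓ hℓ).pos
  have hζm : ζ ^ m = 1 := hζ.pow_eq_one
  constructor
  · -- Part (a)
    -- ζ is an algebraic integer
    obtain ⟨z, hz⟩ : ∃ z : 𝓞 K, (algebraMap (𝓞 K) K z) = (ζ : K) := by
      refine ⟨⟨(ζ : K), ?_⟩, rfl⟩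
      refine IsIntegral.of_pow hm0 ?_
      have : (ζ : K) ^ m = 1 := by rw [← Units.val_pow_eq_pow_val, hζm, Units.val_one]
      rw [this]; exact isIntegral_one
    -- nonvanishing of z^j - 1 for 0 < j < m
    have hzj : ∀ j ∈ Finset.Ioo 0 m, z ^ j - 1 ≠ 0 := by
      intro j hj h0
      rw [Finset.mem_Ioo] at hj
      have : (ζ : K) ^ j = 1 := by
        have := congrArg (algebraMap (𝓞 K) K) h0
        rw [map_sub, map_pow, hz, map_one, map_zero, sub_eq_zero] at this
        exact this
      have : ζ ^ j = 1 := Units.ext (by rw [Units.val_pow_eq_pow_val, this, Units.val_one])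
      exact hζ.pow_ne_one_of_pos_of_lt hj.1.ne' hj.2 this
    -- the finite bad set
    have hfin : (⋃ j ∈ Finset.Ioo 0 m,
        {𝔭 : Ideal (𝓞 K) | 𝔭 ∣ Ideal.span {z ^ j - 1}}).Finite :=
      Set.Finite.biUnion (Finset.Ioo 0 m).finite_toSet
        (fun j hj => finite_primes_containing _ (hzj j hj))
    refine ⟨hfin.toFinset, fun 𝔭 h𝔭 hT => ?_⟩
    -- key: RedOne of ζ^j for 0 < j < m forces 𝔭 ∈ T
    have key : ∀ k : ℕ, RedOne K 𝔭 ((ζ : K) ^ k) → m ∣ k := by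
      intro k hk
      by_contra hmk
      have hjIoo : k % m ∈ Finset.Ioo 0 m := by
        rw [Finset.mem_Ioo]
        exact ⟨Nat.pos_of_ne_zero fun h => hmk (Nat.dvd_of_mod_eq_zero h),
          Nat.mod_lt _ hm0⟩
      -- ζ^k = ζ^(k % m)
      have hpow : (ζ : K) ^ k = (ζ : K) ^ (k % m) := by
        conv_lhs => rw [← Nat.mod_add_div k m]
        rw [pow_add, pow_mul]
        have : (ζ : K) ^ m = 1 := by rw [← Units.val_pow_eq_pow_val, hζm, Units.val_one]
        rw [this, one_pow, mul_one]
      rw [hpow] at hk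
      obtain ⟨a, b, hb, hab, hd⟩ := hk
      have hba : b * z ^ (k % m) = a := by
        have : algebraMap (𝓞 K) K (b * z ^ (k % m)) = algebraMap (𝓞 K) K a := by
          rw [map_mul, map_pow, hz]; exact hab
        exact FaithfulSMul.algebraMap_injective (𝓞 K) K this
      have hmem : z ^ (k % m) - 1 ∈ 𝔭 := by
        haveI := h𝔭.isPrime
        have : b * (z ^ (k % m) - 1) ∈ 𝔭 := by
          rw [mul_sub, mul_one, hba]; exact hd
        rcases Ideal.IsPrime.mem_or_mem ‹𝔭.IsPrime› this with h | h
        · exact absurd h hb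
        · exact h
      apply hT
      rw [Set.Finite.mem_toFinset]
      exact Set.mem_biUnion hjIoo
        ((Ideal.dvd_span_singleton).mpr hmem)
    -- conclude about the sInf
    unfold redOrder
    rcases Set.eq_empty_or_nonempty
        {k | 0 < k ∧ ∀ i, RedOne K 𝔭 ((P i : K) ^ k)} with he | hne
    · rw [he, Nat.sInf_empty]; exact dvd_zero m
    · have hmem := Nat.sInf_mem hne
      obtain ⟨-, h2⟩ := hmem
      have hP1 : P 1 = ζ := by rw [hP]; rfl
      have h2' := h2 1
      rw [hP1] at h2'
      exact key _ h2'
  · -- Part (b)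
    rintro ⟨A, c, hc, hAc⟩
    have h0 := hAc 0
    have h1 := hAc 1
    rw [hP, hQ, Fin.prod_univ_two] at h0 h1
    simp only [Matrix.cons_val_one, Matrix.head_cons, Matrix.cons_val_zero] at h0 h1
    -- h0 : R ^ A 0 0 * ζ ^ A 0 1 = W ^ c ; h1 : R ^ A 1 0 * ζ ^ A 1 1 = 1 ^ c
    have hζz : ∀ t : ℤ, ζ ^ (t * (m : ℤ)) = 1 := by
      intro t
      rw [mul_comm, zpow_mul, zpow_natCast, hζm, one_zpow]
    have hc0 : R ^ (A 0 0 * (m : ℤ)) * W ^ (-(c * (m : ℤ))) = 1 := by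
      have := congrArg (· ^ (m : ℤ)) h0
      simp only [mul_zpow, ← zpow_natCast (R ^ A 0 0), ← zpow_natCast (ζ ^ A 0 1),
        ← zpow_natCast (W ^ c), ← zpow_mul] at this
      rw [hζz (A 0 1), mul_one] at this
      rw [this, ← zpow_add, add_neg_cancel, zpow_zero]
    have := (hind _ _ hc0).2
    rw [neg_eq_zero, mul_eq_zero] at this
    rcases this with h | h
    · exact hc h
    · exact absurd h (by exact_mod_cast hm0.ne')
end
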